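/- For every integer m ≥ 1 and every real b, the polynomial S(τ) = Σ_{l=0}^{m} (b^{m−l}/(m−l)!)·τ^l satisfies the homogeneous equation τ⁴S″(τ) + [(2−m)τ³ + bτ²]S′(τ) − mτ²S(τ) = 0 at every real τ. -/

import Mathlib

/-- The polynomial `S(τ) = Σ_{l=0}^{m} (b^{m−l}/(m−l)!)·τ^l` solves
the homogeneous version of (F1). -/
theorem stmt_13 (m : ℕ) (hm : 1 ≤ m) (b : ℝ) (τ : ℝ) :
    τ^4 * deriv (deriv (fun s : ℝ =>
        ∑ l ∈ Finset.range (m+1), b^(m-l) / ((m-l).factorial : ℝ) * s^l)) τ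
      + ((2-(m:ℝ))*τ^3 + b*τ^2) * deriv (fun s : ℝ =>
          ∑ l ∈ Finset.range (m+1), b^(m-l) / ((m-l).factorial : ℝ) * s^l) τ
      - (m:ℝ)*τ^2 *
          (∑ l ∈ Finset.range (m+1), b^(m-l) / ((m-l).factorial : ℝ) * τ^l) = 0 := by
  classical
  set c : ℕ → ℝ := fun l => b^(m-l) / ((m-l).factorial : ℝ) with hc
  have hd1 : deriv (fun s : ℝ =>
      ∑ l ∈ Finset.range (m+1), b^(m-l) / ((m-l).factorial : ℝ) * s^l)
      = fun x : ℝ => ∑ l ∈ Finset.range (m+1), c l * ((l:ℝ) * x^(l-1)) := by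
    funext x
    rw [deriv_fun_sum (fun i _ => (differentiableAt_pow i).const_mul _)]
    exact Finset.sum_congr rfl fun l _ => by
      rw [deriv_const_mul _ (differentiableAt_pow l), deriv_pow_field]
  have hd2 : deriv (deriv (fun s : ℝ =>
      ∑ l ∈ Finset.range (m+1), b^(m-l) / ((m-l).factorial : ℝ) * s^l)) τ
      = ∑ l ∈ Finset.range (m+1),
          c l * ((l:ℝ) * (((l-1:ℕ):ℝ) * τ^(l-1-1))) := by
    rw [hd1, deriv_fun_sum (fun i _ => ((differentiableAt_pow _).const_mul _).const_mul _)]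
    exact Finset.sum_congr rfl fun l _ => by
      rw [deriv_const_mul _ ((differentiableAt_pow _).const_mul _),
        deriv_const_mul _ (differentiableAt_pow _), deriv_pow_field]
  rw [hd2, hd1]
  simp only []
  rw [Finset.mul_sum, Finset.mul_sum, Finset.mul_sum, ← Finset.sum_add_distrib,
    ← Finset.sum_sub_distrib]
  have step : ∀ l ∈ Finset.range (m+1),
      τ^4 * (c l * ((l:ℝ) * (((l-1:ℕ):ℝ) * τ^(l-1-1))))
        + ((2-(m:ℝ))*τ^3 + b*τ^2) * (c l * ((l:ℝ) * τ^(l-1)))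
        - (m:ℝ)*τ^2 * (c l * τ^l)
      = ((l:ℝ)+1)*((l:ℝ)-m) * c l * τ^(l+2) + b*(l:ℝ) * c l * τ^(l+1) := by
    intro l _
    match l with
    | 0 => push_cast; ring
    | 1 => push_cast; ring
    | (n+2) =>
      simp only [show n+2-1 = n+1 from rfl, show n+1-1 = n from rfl]
      push_cast
      ring
  rw [Finset.sum_congr rfl step, Finset.sum_add_distrib, Finset.sum_range_succ,
    Finset.sum_range_succ']
  have hA : ((m:ℝ)+1)*((m:ℝ)-m) * c m * τ^(m+2) = 0 := by
    simp
  have hB : b*((0:ℕ):ℝ) * c 0 * τ^(0+1) = 0 := by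
    simp
  rw [hA, hB, add_zero, add_zero, ← Finset.sum_add_distrib]
  refine Finset.sum_eq_zero fun k hk => ?_
  have hkm : k < m := Finset.mem_range.mp hk
  obtain ⟨n, rfl⟩ : ∃ n, m = k + n + 1 := ⟨m - k - 1, by omega⟩
  have e1 : k + n + 1 - k = n + 1 := by omega
  have e2 : k + n + 1 - (k + 1) = n := by omega
  rw [hc]
  simp only [e1, e2]
  have hfac : (((n+1).factorial : ℕ) : ℝ) = ((n:ℝ)+1) * (n.factorial : ℝ) := by
    rw [Nat.factorial_succ]; push_cast; ring
  have hne : ((n.factorial : ℕ) : ℝ) ≠ 0 := Nat.cast_ne_zero.mpr n.factorial_ne_zero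
  have hne1 : ((n:ℝ)+1) ≠ 0 := by positivity
  rw [hfac]
  have hb : b ^ (n + 1) = b ^ n * b := pow_succ b n
  push_cast
  field_simp
  ring
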